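/- Let f: X → Y be a 𝒯-functor between cocomplete 𝒯-categories, and let Sup_X ⊣ y_X and Sup_Y ⊣ y_Y be the left adjoints of the Yoneda functors. The following are equivalent: (i) f is left adjoint; (ii) f is cocontinuous (preserves all weighted colimits); (iii) f · Sup_X ≅ Sup_Y · f̂. -/

import Mathlib

universe u

namespace Paper

/-- A strict topological theory `𝒯 = (𝕋, V, ξ)`: a commutative unital quantale `V`
(a complete lattice with a commutative monoid structure whose multiplication preserves
suprema in each variable, with `⊥ < k`), a `Set`-monad `𝕋 = (T, e, m)` such that `T`
sends pullbacks to weak pullbacks and the naturality squares of `m` are weak pullbacks,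
and a `𝕋`-algebra structure `ξ : T V → V` for which `⊗` and `k` are `𝕋`-algebra
homomorphisms and `ξ_X := ξ ∘ T(-)` is a (monotone) natural transformation
`P_V → P_V T`. -/
structure TopTheory (V : Type u) [CompleteLattice V] (T : Type u → Type u) where
  tens : V → V → V
  unit : V
  tens_comm : ∀ u v : V, tens u v = tens v u
  tens_assoc : ∀ u v w : V, tens (tens u v) w = tens u (tens v w)
  unit_tens : ∀ v : V, tens unit v = v
  tens_sSup : ∀ (u : V) (S : Set V), tens u (sSup S) = ⨆ v ∈ S, tens u v
  bot_lt_unit : (⊥ : V) < unit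
  map : ∀ {X Y : Type u}, (X → Y) → T X → T Y
  map_id : ∀ {X : Type u}, map (id : X → X) = id
  map_comp : ∀ {X Y Z : Type u} (g : Y → Z) (f : X → Y) (𝔵 : T X),
    map (g ∘ f) 𝔵 = map g (map f 𝔵)
  e : ∀ {X : Type u}, X → T X
  m : ∀ {X : Type u}, T (T X) → T X
  e_nat : ∀ {X Y : Type u} (f : X → Y) (x : X), map f (e x) = e (f x)
  m_nat : ∀ {X Y : Type u} (f : X → Y) (𝔛 : T (T X)), map f (m 𝔛) = m (map (map f) 𝔛)
  m_e : ∀ {X : Type u} (𝔵 : T X), m (e 𝔵) = 𝔵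
  m_map_e : ∀ {X : Type u} (𝔵 : T X), m (map e 𝔵) = 𝔵
  m_assoc : ∀ {X : Type u} (𝔜 : T (T (T X))), m (m 𝔜) = m (map m 𝔜)
  /-- (BC): `T` sends pullbacks to weak pullbacks. -/
  map_bc : ∀ {X Y Z : Type u} (f : X → Z) (g : Y → Z) (𝔵 : T X) (𝔶 : T Y),
    map f 𝔵 = map g 𝔶 →
    ∃ 𝔴 : T {p : X × Y // f p.1 = g p.2},
      map (fun p => p.1.1) 𝔴 = 𝔵 ∧ map (fun p => p.1.2) 𝔴 = 𝔶
  /-- (BC): every naturality square of `m` is a weak pullback. -/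
  m_bc : ∀ {X Y : Type u} (f : X → Y) (𝔜 : T (T Y)) (𝔵 : T X),
    m 𝔜 = map f 𝔵 → ∃ 𝔛 : T (T X), map (map f) 𝔛 = 𝔜 ∧ m 𝔛 = 𝔵
  xi : T V → V
  xi_e : ∀ v : V, xi (e v) = v
  xi_m : ∀ 𝔙 : T (T V), xi (m 𝔙) = xi (map xi 𝔙)
  /-- `k : 1 → V` is a `𝕋`-algebra homomorphism. -/
  xi_unit : ∀ {X : Type u} (𝔵 : T X), xi (map (fun _ => unit) 𝔵) = unit
  /-- `⊗ : V × V → V` is a `𝕋`-algebra homomorphism. -/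
  xi_tens : ∀ 𝔴 : T (V × V),
    xi (map (fun p => tens p.1 p.2) 𝔴) = tens (xi (map Prod.fst 𝔴)) (xi (map Prod.snd 𝔴))
  /-- each component `ξ_X : V^X → V^{T X}` is monotone. -/
  xi_mono : ∀ {X : Type u} (φ φ' : X → V), (∀ x, φ x ≤ φ' x) →
    ∀ 𝔵 : T X, xi (map φ 𝔵) ≤ xi (map φ' 𝔵)
  /-- `ξ_X` is a natural transformation `P_V → P_V T`. -/
  xi_nat : ∀ {X Y : Type u} (f : X → Y) (φ : X → V) (𝔶 : T Y),
    (⨆ 𝔵 : {𝔵 : T X // map f 𝔵 = 𝔶}, xi (map φ 𝔵.1)) =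
      xi (map (fun y => ⨆ x : {x : X // f x = y}, φ x.1) 𝔶)

namespace TopTheory

variable {V : Type u} [CompleteLattice V] {T : Type u → Type u}

/-- The internal hom of the quantale: `u ⊗ (-) ⊣ hom (u, -)`. -/
def ihom (𝒯 : TopTheory V T) (u w : V) : V := sSup {z | 𝒯.tens u z ≤ w}

/-- The extension `T_ξ` of `T : Set → Set` to `V`-relations. -/
def Txi (𝒯 : TopTheory V T) {X Y : Type u} (r : X → Y → V) (𝔵 : T X) (𝔶 : T Y) : V :=
  ⨆ 𝔴 : {w : T (X × Y) // 𝒯.map Prod.fst w = 𝔵 ∧ 𝒯.map Prod.snd w = 𝔶},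
    𝒯.xi (𝒯.map (fun p => r p.1 p.2) 𝔴.1)

/-- Kleisli convolution `β ∘ α = β · T_ξ α · m_X°` of `𝒯`-relations
`α : X ⇸ Y` and `β : Y ⇸ Z`. -/
def kleisli (𝒯 : TopTheory V T) {X Y Z : Type u}
    (β : T Y → Z → V) (α : T X → Y → V) (𝔵 : T X) (z : Z) : V :=
  ⨆ 𝔛 : {𝔛 : T (T X) // 𝒯.m 𝔛 = 𝔵}, ⨆ 𝔶 : T Y, 𝒯.tens (𝒯.Txi α 𝔛.1 𝔶) (β 𝔶 z)

/-- The `𝒯`-relation `e_X° : X ⇸ X`. -/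
def unitRel (𝒯 : TopTheory V T) (X : Type u) (𝔵 : T X) (x : X) : V :=
  ⨆ _ : 𝔵 = 𝒯.e x, 𝒯.unit

/-- A `𝒯`-category structure on `X`: a `𝒯`-relation `a : X ⇸ X` with
`e_X° ≤ a` and `a ∘ a ≤ a`. -/
structure TCatStr (𝒯 : TopTheory V T) (X : Type u) where
  rel : T X → X → V
  le_refl : ∀ x : X, 𝒯.unit ≤ rel (𝒯.e x) x
  comp : ∀ (𝔵 : T X) (x : X), 𝒯.kleisli rel rel 𝔵 x ≤ rel 𝔵 x

/-- The `𝒯`-module conditions `φ ∘ a ≤ φ` and `b ∘ φ ≤ φ` for a `𝒯`-relation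
`φ : X ⇸ Y` between (structures underlying) `𝒯`-categories `(X,a)` and `(Y,b)`. -/
def IsTModRel (𝒯 : TopTheory V T) {X Y : Type u}
    (a : T X → X → V) (b : T Y → Y → V) (φ : T X → Y → V) : Prop :=
  (∀ 𝔵 y, 𝒯.kleisli φ a 𝔵 y ≤ φ 𝔵 y) ∧ (∀ 𝔵 y, 𝒯.kleisli b φ 𝔵 y ≤ φ 𝔵 y)

variable {𝒯 : TopTheory V T}

/-- `f_* = b · T f`. -/
def modStar {X Y : Type u} (b : 𝒯.TCatStr Y) (f : X → Y) (𝔵 : T X) (y : Y) : V :=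
  b.rel (𝒯.map f 𝔵) y

/-- `f^* = f° · b`. -/
def modCostar {X Y : Type u} (b : 𝒯.TCatStr Y) (f : X → Y) (𝔶 : T Y) (x : X) : V :=
  b.rel 𝔶 (f x)

/-- The extension `φ ⟜ ψ` of `φ : X ⇸∘ Y` along `ψ : X ⇸∘ Z`, given by
`(φ ⟜ ψ)(𝔷,y) = ⋀_{𝔵 ∈ T X} hom((T_ξ ψ · m_X°)(𝔵,𝔷), φ(𝔵,y))`. -/
def extend (𝒯 : TopTheory V T) {X Y Z : Type u}
    (φ : T X → Y → V) (ψ : T X → Z → V) (𝔷 : T Z) (y : Y) : V :=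
  ⨅ 𝔵 : T X, 𝒯.ihom (⨆ 𝔛 : {𝔛 : T (T X) // 𝒯.m 𝔛 = 𝔵}, 𝒯.Txi ψ 𝔛.1 𝔷) (φ 𝔵 y)

/-- A `𝒯`-functor `f : (X,a) → (Y,b)`. -/
def IsTFunctor {X Y : Type u} (a : 𝒯.TCatStr X) (b : 𝒯.TCatStr Y) (f : X → Y) : Prop :=
  ∀ (𝔵 : T X) (x : X), a.rel 𝔵 x ≤ b.rel (𝒯.map f 𝔵) (f x)

/-- A fully faithful `𝒯`-functor. -/
def FullyFaithful {X Y : Type u} (a : 𝒯.TCatStr X) (b : 𝒯.TCatStr Y) (f : X → Y) : Prop :=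
  ∀ (𝔵 : T X) (x : X), a.rel 𝔵 x = b.rel (𝒯.map f 𝔵) (f x)

/-- The order `f ≤ g ⟺ f^* ≤ g^*` on `𝒯`-functors `X → (Y,b)`. -/
def funLE {X Y : Type u} (b : 𝒯.TCatStr Y) (f g : X → Y) : Prop :=
  ∀ (𝔶 : T Y) (x : X), b.rel 𝔶 (f x) ≤ b.rel 𝔶 (g x)

/-- Equivalence `f ≅ g ⟺ f^* = g^*` of `𝒯`-functors `X → (Y,b)`. -/
def FunEquiv {X Y : Type u} (b : 𝒯.TCatStr Y) (f g : X → Y) : Prop :=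
  ∀ (𝔶 : T Y) (x : X), b.rel 𝔶 (f x) = b.rel 𝔶 (g x)

/-- `f ⊣ g`:  `1_X ≤ g·f` and `f·g ≤ 1_Y`. -/
def IsAdjunction {X Y : Type u} (a : 𝒯.TCatStr X) (b : 𝒯.TCatStr Y)
    (f : X → Y) (g : Y → X) : Prop :=
  (∀ (𝔵 : T X) (x : X), a.rel 𝔵 x ≤ a.rel 𝔵 (g (f x))) ∧
    (∀ (𝔶 : T Y) (y : Y), b.rel 𝔶 (f (g y)) ≤ b.rel 𝔶 y)

/-- A left adjoint `𝒯`-functor. -/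
def IsLeftAdjoint {X Y : Type u} (a : 𝒯.TCatStr X) (b : 𝒯.TCatStr Y) (f : X → Y) : Prop :=
  IsTFunctor a b f ∧ ∃ g : Y → X, IsTFunctor b a g ∧ IsAdjunction a b f g

/-- L-separatedness: equivalent `𝒯`-functors into `X` are equal. -/
def Separated {X : Type u} (a : 𝒯.TCatStr X) : Prop :=
  ∀ (A : Type u) (as : 𝒯.TCatStr A) (f g : A → X),
    IsTFunctor as a f → IsTFunctor as a g → FunEquiv a f g → f = g

/-- Injectivity with respect to fully faithful `𝒯`-functors. -/
def Injective {X : Type u} (a : 𝒯.TCatStr X) : Prop :=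
  ∀ (A B : Type u) (as : 𝒯.TCatStr A) (bs : 𝒯.TCatStr B) (f : A → X) (i : A → B),
    IsTFunctor as a f → IsTFunctor as bs i → FullyFaithful as bs i →
      ∃ g : B → X, IsTFunctor bs a g ∧ FunEquiv a (g ∘ i) f

/-- `g : Z → X` is the `ψ`-weighted colimit of `h : A → X`, i.e. `g_* = h_* ⟜ ψ`. -/
def IsColimit {X A Z : Type u} (a : 𝒯.TCatStr X) (h : A → X) (ψ : T A → Z → V)
    (g : Z → X) : Prop :=
  ∀ (𝔷 : T Z) (x : X), modStar a g 𝔷 x = 𝒯.extend (modStar a h) ψ 𝔷 x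

/-- Cocompleteness: every weighted diagram has a colimit. -/
def Cocomplete {X : Type u} (a : 𝒯.TCatStr X) : Prop :=
  ∀ (A Z : Type u) (as : 𝒯.TCatStr A) (cs : 𝒯.TCatStr Z) (h : A → X),
    IsTFunctor as a h → ∀ ψ : T A → Z → V, 𝒯.IsTModRel as.rel cs.rel ψ →
      ∃ g : Z → X, IsTFunctor cs a g ∧ IsColimit a h ψ g

/-- Cocontinuity: preservation of all weighted colimits. -/
def Cocontinuous {X Y : Type u} (a : 𝒯.TCatStr X) (b : 𝒯.TCatStr Y) (f : X → Y) : Prop :=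
  ∀ (A Z : Type u) (as : 𝒯.TCatStr A) (cs : 𝒯.TCatStr Z) (h : A → X)
    (ψ : T A → Z → V) (g : Z → X),
    IsTFunctor as a h → 𝒯.IsTModRel as.rel cs.rel ψ → IsTFunctor cs a g →
      IsColimit a h ψ g → IsColimit b (f ∘ h) ψ (f ∘ g)

/-- A presheaf on `(X,a)`: a `𝒯`-module `X ⇸∘ G`, where `G = (1, e_1°)`. -/
def IsPresheaf {X : Type u} (a : 𝒯.TCatStr X) (ψ : T X → V) : Prop :=
  𝒯.IsTModRel a.rel (𝒯.unitRel PUnit) (fun 𝔵 _ => ψ 𝔵)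

/-- The underlying set of the presheaf `𝒯`-category `X̂`. -/
def Hat {X : Type u} (a : 𝒯.TCatStr X) : Type u := {ψ : T X → V // IsPresheaf a ψ}

/-- The `𝒯`-category structure `⟦-,-⟧` of `V^{|X|}`. -/
def powRel (𝒯 : TopTheory V T) (X : Type u) (𝔭 : T (T X → V)) (ψ : T X → V) : V :=
  ⨅ 𝔮 : {q : T ((T X) × (T X → V)) // 𝒯.map Prod.snd q = 𝔭},
    𝒯.ihom (𝒯.xi (𝒯.map (fun p => p.2 p.1) 𝔮.1)) (ψ (𝒯.m (𝒯.map Prod.fst 𝔮.1)))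

/-- `hs` is the `𝒯`-category structure on `X̂` inherited from `V^{|X|}`. -/
def IsHatStr {X : Type u} (a : 𝒯.TCatStr X) (hs : 𝒯.TCatStr (Hat a)) : Prop :=
  ∀ (𝔭 : T (Hat a)) (ψ : Hat a), hs.rel 𝔭 ψ = 𝒯.powRel X (𝒯.map Subtype.val 𝔭) ψ.1

/-- `y` is the Yoneda functor `X → X̂`, `y x = a(-,x)`. -/
def IsYoneda {X : Type u} (a : 𝒯.TCatStr X) (y : X → Hat a) : Prop :=
  ∀ (x : X) (𝔵 : T X), (y x).1 𝔵 = a.rel 𝔵 x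

/-- The underlying map `ψ ↦ ψ ∘ f^*` of `f̂ : X̂ → Ŷ`. -/
def hatMapRel {X Y : Type u} (b : 𝒯.TCatStr Y) (f : X → Y) (ψ : T X → V) (𝔶 : T Y) : V :=
  𝒯.kleisli (fun 𝔵 (_ : PUnit.{u + 1}) => ψ 𝔵) (modCostar b f) 𝔶 PUnit.unit

/-- `fh` is the `𝒯`-functor `f̂ : X̂ → Ŷ`, with underlying map `ψ ↦ ψ ∘ f^*`. -/
def IsHatMap {X Y : Type u} (a : 𝒯.TCatStr X) (b : 𝒯.TCatStr Y) (f : X → Y)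
    (fh : Hat a → Hat b) : Prop :=
  ∀ (ψ : Hat a) (𝔶 : T Y), (fh ψ).1 𝔶 = hatMapRel b f ψ.1 𝔶

/-- An inhabited `𝒯`-module: `k ≤ ⋀_y ⋁_𝔵 φ(𝔵,y)`. -/
def InhabitedMod (𝒯 : TopTheory V T) {X Y : Type u} (φ : T X → Y → V) : Prop :=
  𝒯.unit ≤ ⨅ y : Y, ⨆ 𝔵 : T X, φ 𝔵 y

/-- A dense `𝒯`-functor: `f_*` is inhabited. -/
def Dense {X Y : Type u} (b : 𝒯.TCatStr Y) (f : X → Y) : Prop :=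
  𝒯.InhabitedMod (modStar b f)

/-- The underlying set of `X⁺ = {ψ ∈ X̂ ∣ ψ inhabited}`. -/
def Plus {X : Type u} (a : 𝒯.TCatStr X) : Type u :=
  {ψ : Hat a // 𝒯.InhabitedMod (fun 𝔵 (_ : PUnit.{u + 1}) => ψ.1 𝔵)}

/-- `ps` is the `𝒯`-category structure on `X⁺` inherited from `X̂`. -/
def IsPlusStr {X : Type u} (a : 𝒯.TCatStr X) (hs : 𝒯.TCatStr (Hat a))
    (ps : 𝒯.TCatStr (Plus a)) : Prop :=
  ∀ (𝔭 : T (Plus a)) (ψ : Plus a), ps.rel 𝔭 ψ = hs.rel (𝒯.map Subtype.val 𝔭) ψ.1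

/-- Inhabited-cocompleteness: all colimits with inhabited weights exist. -/
def ICocomplete {X : Type u} (a : 𝒯.TCatStr X) : Prop :=
  ∀ (A Z : Type u) (as : 𝒯.TCatStr A) (cs : 𝒯.TCatStr Z) (h : A → X),
    IsTFunctor as a h → ∀ ψ : T A → Z → V, 𝒯.IsTModRel as.rel cs.rel ψ →
      𝒯.InhabitedMod ψ → ∃ g : Z → X, IsTFunctor cs a g ∧ IsColimit a h ψ g

/-- Inhabited-cocontinuity: preservation of all colimits with inhabited weights. -/
def ICocontinuous {X Y : Type u} (a : 𝒯.TCatStr X) (b : 𝒯.TCatStr Y) (f : X → Y) : Prop :=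
  ∀ (A Z : Type u) (as : 𝒯.TCatStr A) (cs : 𝒯.TCatStr Z) (h : A → X)
    (ψ : T A → Z → V) (g : Z → X),
    IsTFunctor as a h → 𝒯.IsTModRel as.rel cs.rel ψ → 𝒯.InhabitedMod ψ →
      IsTFunctor cs a g → IsColimit a h ψ g → IsColimit b (f ∘ h) ψ (f ∘ g)


section Lemmas

/-! ### Quantale lemmas -/

lemma tens_iSup' {ι : Sort v} (𝒯 : TopTheory V T) (c : V) (u : ι → V) :
    𝒯.tens c (⨆ i, u i) = ⨆ i, 𝒯.tens c (u i) := by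
  rw [iSup, 𝒯.tens_sSup, iSup_range]

lemma tens_iSup {ι : Sort v} (𝒯 : TopTheory V T) (u : ι → V) (c : V) :
    𝒯.tens (⨆ i, u i) c = ⨆ i, 𝒯.tens (u i) c := by
  rw [𝒯.tens_comm, tens_iSup']
  exact iSup_congr fun i => 𝒯.tens_comm c (u i)

lemma tens_mono_right (𝒯 : TopTheory V T) {u v v' : V} (h : v ≤ v') :
    𝒯.tens u v ≤ 𝒯.tens u v' := by
  have h2 : v' = ⨆ i : ({v, v'} : Set V), (i : V) := by
    rw [iSup_subtype]
    refine le_antisymm (le_iSup₂ (f := fun (w : V) (_ : w ∈ ({v, v'} : Set V)) => w) v' (by simp))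
      (iSup₂_le fun w hw => ?_)
    rcases hw with h' | h' <;> simp_all <;> simp_all [Set.mem_singleton_iff]
  calc 𝒯.tens u v ≤ ⨆ i : ({v, v'} : Set V), 𝒯.tens u i :=
        le_iSup (fun i : ({v, v'} : Set V) => 𝒯.tens u i) ⟨v, by simp⟩
    _ = 𝒯.tens u v' := by rw [← tens_iSup', ← h2]

lemma tens_mono_left (𝒯 : TopTheory V T) {u u' c : V} (h : u ≤ u') :
    𝒯.tens u c ≤ 𝒯.tens u' c := by
  rw [𝒯.tens_comm u c, 𝒯.tens_comm u' c]; exact 𝒯.tens_mono_right h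

lemma tens_bot (𝒯 : TopTheory V T) (u : V) : 𝒯.tens u ⊥ = ⊥ := by
  have := 𝒯.tens_sSup u ∅
  simpa using this

lemma tens_unit (𝒯 : TopTheory V T) (u : V) : 𝒯.tens u 𝒯.unit = u := by
  rw [𝒯.tens_comm, 𝒯.unit_tens]

lemma le_ihom (𝒯 : TopTheory V T) {u z w : V} (h : 𝒯.tens u z ≤ w) : z ≤ 𝒯.ihom u w :=
  le_sSup h

lemma tens_ihom_le (𝒯 : TopTheory V T) (u w : V) : 𝒯.tens u (𝒯.ihom u w) ≤ w := by
  rw [ihom, 𝒯.tens_sSup]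
  exact iSup₂_le fun z hz => hz

lemma tens_le_of_le_ihom (𝒯 : TopTheory V T) {u z w : V} (h : z ≤ 𝒯.ihom u w) :
    𝒯.tens u z ≤ w :=
  (𝒯.tens_mono_right h).trans (𝒯.tens_ihom_le u w)

lemma ihom_mono_left (𝒯 : TopTheory V T) {u u' w : V} (h : u ≤ u') :
    𝒯.ihom u' w ≤ 𝒯.ihom u w :=
  𝒯.le_ihom ((𝒯.tens_mono_left h).trans (𝒯.tens_ihom_le u' w))

lemma unit_le_ihom (𝒯 : TopTheory V T) {u w : V} (h : u ≤ w) : 𝒯.unit ≤ 𝒯.ihom u w :=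
  𝒯.le_ihom (by rw [𝒯.tens_unit]; exact h)

lemma le_of_le_ihom (𝒯 : TopTheory V T) {z u w : V} (hu : 𝒯.unit ≤ u)
    (h : z ≤ 𝒯.ihom u w) : z ≤ w := by
  calc z = 𝒯.tens 𝒯.unit z := (𝒯.unit_tens z).symm
    _ ≤ 𝒯.tens u (𝒯.ihom u w) := (𝒯.tens_mono_left hu).trans (𝒯.tens_mono_right h)
    _ ≤ w := 𝒯.tens_ihom_le u w

lemma ihom_unit (𝒯 : TopTheory V T) (w : V) : 𝒯.ihom 𝒯.unit w = w := by
  refine le_antisymm ?_ (𝒯.le_ihom (by rw [𝒯.unit_tens]))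
  have := 𝒯.tens_ihom_le 𝒯.unit w
  rwa [𝒯.unit_tens] at this

/-! ### `map`, `Txi` and `kleisli` helpers -/

lemma map_comp' (𝒯 : TopTheory V T) {X Y Z : Type u} (g : Y → Z) (f : X → Y) (𝔵 : T X) :
    𝒯.map (fun x => g (f x)) 𝔵 = 𝒯.map g (𝒯.map f 𝔵) :=
  𝒯.map_comp g f 𝔵

lemma le_Txi (𝒯 : TopTheory V T) {X Y : Type u} (r : X → Y → V) {𝔵 : T X} {𝔶 : T Y}
    (𝔴 : T (X × Y)) (h1 : 𝒯.map Prod.fst 𝔴 = 𝔵) (h2 : 𝒯.map Prod.snd 𝔴 = 𝔶) :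
    𝒯.xi (𝒯.map (fun p => r p.1 p.2) 𝔴) ≤ 𝒯.Txi r 𝔵 𝔶 :=
  le_iSup (fun 𝔴' : {w : T (X × Y) // 𝒯.map Prod.fst w = 𝔵 ∧ 𝒯.map Prod.snd w = 𝔶} =>
    𝒯.xi (𝒯.map (fun p => r p.1 p.2) 𝔴'.1)) ⟨𝔴, h1, h2⟩

lemma Txi_le (𝒯 : TopTheory V T) {X Y : Type u} {r : X → Y → V} {𝔵 : T X} {𝔶 : T Y} {c : V}
    (h : ∀ 𝔴 : T (X × Y), 𝒯.map Prod.fst 𝔴 = 𝔵 → 𝒯.map Prod.snd 𝔴 = 𝔶 →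
      𝒯.xi (𝒯.map (fun p => r p.1 p.2) 𝔴) ≤ c) :
    𝒯.Txi r 𝔵 𝔶 ≤ c :=
  iSup_le fun 𝔴 => h 𝔴.1 𝔴.2.1 𝔴.2.2

lemma le_kleisli (𝒯 : TopTheory V T) {X Y Z : Type u} (β : T Y → Z → V) (α : T X → Y → V)
    {𝔵 : T X} {z : Z} (𝔛 : T (T X)) (h : 𝒯.m 𝔛 = 𝔵) (𝔶 : T Y) :
    𝒯.tens (𝒯.Txi α 𝔛 𝔶) (β 𝔶 z) ≤ 𝒯.kleisli β α 𝔵 z :=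
  le_trans (le_iSup (fun 𝔶' => 𝒯.tens (𝒯.Txi α 𝔛 𝔶') (β 𝔶' z)) 𝔶)
    (le_iSup (fun 𝔛' : {𝔛' : T (T X) // 𝒯.m 𝔛' = 𝔵} =>
      ⨆ 𝔶', 𝒯.tens (𝒯.Txi α 𝔛'.1 𝔶') (β 𝔶' z)) ⟨𝔛, h⟩)

lemma kleisli_le (𝒯 : TopTheory V T) {X Y Z : Type u} {β : T Y → Z → V} {α : T X → Y → V}
    {𝔵 : T X} {z : Z} {c : V}
    (h : ∀ 𝔛 : T (T X), 𝒯.m 𝔛 = 𝔵 → ∀ 𝔶 : T Y,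
      𝒯.tens (𝒯.Txi α 𝔛 𝔶) (β 𝔶 z) ≤ c) :
    𝒯.kleisli β α 𝔵 z ≤ c :=
  iSup_le fun 𝔛 => iSup_le fun 𝔶 => h 𝔛.1 𝔛.2 𝔶

lemma unit_le_xi (𝒯 : TopTheory V T) {X : Type u} (φ : X → V) (𝔵 : T X)
    (h : ∀ x, 𝒯.unit ≤ φ x) : 𝒯.unit ≤ 𝒯.xi (𝒯.map φ 𝔵) := by
  have := 𝒯.xi_mono (fun _ => 𝒯.unit) φ h 𝔵
  rwa [𝒯.xi_unit] at this

/-! ### One-step composition lemmas -/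

lemma comp_right {𝒯 : TopTheory V T} {Y : Type u} (b : 𝒯.TCatStr Y) (𝔶 : T Y) (z y : Y) :
    𝒯.tens (b.rel 𝔶 z) (b.rel (𝒯.e z) y) ≤ b.rel 𝔶 y := by
  refine le_trans ?_ (b.comp 𝔶 y)
  refine le_trans ?_ (𝒯.le_kleisli b.rel b.rel (𝒯.e 𝔶) (𝒯.m_e 𝔶) (𝒯.e z))
  refine 𝒯.tens_mono_left ?_
  refine le_trans (le_of_eq ?_)
    (𝒯.le_Txi b.rel (𝒯.e (𝔶, z)) (by rw [𝒯.e_nat]) (by rw [𝒯.e_nat]))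
  rw [𝒯.e_nat (fun p => b.rel p.1 p.2) (𝔶, z), 𝒯.xi_e]

lemma le_of_unit_le {𝒯 : TopTheory V T} {Y : Type u} (b : 𝒯.TCatStr Y) {z y : Y}
    (h : 𝒯.unit ≤ b.rel (𝒯.e z) y) (𝔶 : T Y) : b.rel 𝔶 z ≤ b.rel 𝔶 y := by
  calc b.rel 𝔶 z = 𝒯.tens (b.rel 𝔶 z) 𝒯.unit := (𝒯.tens_unit _).symm
    _ ≤ 𝒯.tens (b.rel 𝔶 z) (b.rel (𝒯.e z) y) := 𝒯.tens_mono_right h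
    _ ≤ b.rel 𝔶 y := comp_right b 𝔶 z y

lemma step_left {𝒯 : TopTheory V T} {X : Type u} (a : 𝒯.TCatStr X) (h : X → X)
    (hh : ∀ x, 𝒯.unit ≤ a.rel (𝒯.e x) (h x)) (𝔵 : T X) (x : X) :
    a.rel (𝒯.map h 𝔵) x ≤ a.rel 𝔵 x := by
  refine le_trans ?_ (a.comp 𝔵 x)
  refine le_trans ?_ (𝒯.le_kleisli a.rel a.rel (𝒯.map 𝒯.e 𝔵) (𝒯.m_map_e 𝔵) (𝒯.map h 𝔵))
  have h1 : 𝒯.unit ≤ 𝒯.Txi a.rel (𝒯.map 𝒯.e 𝔵) (𝒯.map h 𝔵) := by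
    refine le_trans ?_ (𝒯.le_Txi a.rel (𝒯.map (fun x' => (𝒯.e x', h x')) 𝔵) ?_ ?_)
    · rw [← 𝒯.map_comp']
      exact 𝒯.unit_le_xi _ 𝔵 hh
    · rw [← 𝒯.map_comp']
    · rw [← 𝒯.map_comp']
  calc a.rel (𝒯.map h 𝔵) x = 𝒯.tens 𝒯.unit (a.rel (𝒯.map h 𝔵) x) := (𝒯.unit_tens _).symm
    _ ≤ _ := 𝒯.tens_mono_left h1

/-- Lemma A: an adjunction `f ⊣ g` yields `f_* = g^*`. -/
lemma adjoint_star {𝒯 : TopTheory V T} {X Y : Type u} {a : 𝒯.TCatStr X} {b : 𝒯.TCatStr Y}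
    {f : X → Y} {g : Y → X} (hf : IsTFunctor a b f) (hg : IsTFunctor b a g)
    (hadj : IsAdjunction a b f g) (𝔵 : T X) (y : Y) :
    b.rel (𝒯.map f 𝔵) y = a.rel 𝔵 (g y) := by
  refine le_antisymm ?_ ?_
  · refine le_trans (hg _ y) ?_
    rw [← 𝒯.map_comp']
    exact step_left a (fun x => g (f x))
      (fun x => le_trans (a.le_refl x) (hadj.1 _ x)) 𝔵 (g y)
  · exact le_trans (hf 𝔵 (g y)) (hadj.2 _ y)

/-- Pushing `Txi` along maps compatible with a pointwise inequality of relations. -/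
lemma Txi_comp_le (𝒯 : TopTheory V T) {X Y Z W : Type u} (r : X → Y → V) (s : Z → W → V)
    (φ : X → Z) (ψ : Y → W) (hpt : ∀ x y, r x y ≤ s (φ x) (ψ y)) (𝔵 : T X) (𝔶 : T Y) :
    𝒯.Txi r 𝔵 𝔶 ≤ 𝒯.Txi s (𝒯.map φ 𝔵) (𝒯.map ψ 𝔶) := by
  refine 𝒯.Txi_le ?_
  intro 𝔴 h1 h2
  refine le_trans ?_ (𝒯.le_Txi s (𝒯.map (fun p => (φ p.1, ψ p.2)) 𝔴) ?_ ?_)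
  · rw [← 𝒯.map_comp']
    exact 𝒯.xi_mono _ _ (fun p => hpt p.1 p.2) 𝔴
  · rw [← 𝒯.map_comp', ← h1, ← 𝒯.map_comp' φ Prod.fst]
  · rw [← 𝒯.map_comp', ← h2, ← 𝒯.map_comp' ψ Prod.snd]

lemma Txi_modStar_le {𝒯 : TopTheory V T} {X Y : Type u} (b : 𝒯.TCatStr Y) (f : X → Y)
    (𝔛 : T (T X)) (𝔶 : T Y) :
    𝒯.Txi (modStar b f) 𝔛 𝔶 ≤ 𝒯.Txi b.rel (𝒯.map (𝒯.map f) 𝔛) 𝔶 := by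
  have := 𝒯.Txi_comp_le (modStar b f) b.rel (𝒯.map f) id
    (fun 𝔵' y' => le_of_eq rfl) 𝔛 𝔶
  rwa [𝒯.map_id, id_eq] at this

lemma Txi_modCostar_le {𝒯 : TopTheory V T} {X Y : Type u} (b : 𝒯.TCatStr Y) (f : X → Y)
    (𝔜 : T (T Y)) (𝔵 : T X) :
    𝒯.Txi (modCostar b f) 𝔜 𝔵 ≤ 𝒯.Txi b.rel 𝔜 (𝒯.map f 𝔵) := by
  have := 𝒯.Txi_comp_le (modCostar b f) b.rel id f
    (fun 𝔶' x' => le_of_eq rfl) 𝔜 𝔵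
  rwa [𝒯.map_id, id_eq] at this

/-- `f_*` is a `𝒯`-module for any `𝒯`-functor `f`. -/
lemma modStar_isMod {𝒯 : TopTheory V T} {X Y : Type u} {a : 𝒯.TCatStr X} {b : 𝒯.TCatStr Y}
    {f : X → Y} (hf : IsTFunctor a b f) : 𝒯.IsTModRel a.rel b.rel (modStar b f) := by
  constructor
  · intro 𝔵 y
    refine 𝒯.kleisli_le ?_
    intro 𝔛 h𝔛 𝔵mid
    refine le_trans ?_ (b.comp (𝒯.map f 𝔵) y)
    refine le_trans (𝒯.tens_mono_left
      (𝒯.Txi_comp_le a.rel b.rel (𝒯.map f) f hf 𝔛 𝔵mid)) ?_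
    exact 𝒯.le_kleisli b.rel b.rel (𝒯.map (𝒯.map f) 𝔛)
      (by rw [← 𝒯.m_nat, h𝔛]) (𝒯.map f 𝔵mid)
  · intro 𝔵 y
    refine 𝒯.kleisli_le ?_
    intro 𝔛 h𝔛 𝔶mid
    refine le_trans ?_ (b.comp (𝒯.map f 𝔵) y)
    refine le_trans (𝒯.tens_mono_left (Txi_modStar_le b f 𝔛 𝔶mid)) ?_
    exact 𝒯.le_kleisli b.rel b.rel (𝒯.map (𝒯.map f) 𝔛)
      (by rw [← 𝒯.m_nat, h𝔛]) 𝔶mid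

lemma isTFunctor_id {𝒯 : TopTheory V T} {X : Type u} (a : 𝒯.TCatStr X) :
    IsTFunctor a a id := fun 𝔵 x => by rw [𝒯.map_id]; exact le_refl _

lemma isTFunctor_comp {𝒯 : TopTheory V T} {X Y Z : Type u} {a : 𝒯.TCatStr X}
    {b : 𝒯.TCatStr Y} {c : 𝒯.TCatStr Z} {f : X → Y} {g : Y → Z}
    (hf : IsTFunctor a b f) (hg : IsTFunctor b c g) : IsTFunctor a c (g ∘ f) := by
  intro 𝔵 x
  rw [𝒯.map_comp]
  exact le_trans (hf 𝔵 x) (hg (𝒯.map f 𝔵) (f x))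

lemma Txi_e_le {𝒯 : TopTheory V T} {Y : Type u} (b : 𝒯.TCatStr Y) (𝔐 : T (T Y)) (y : Y) :
    𝒯.Txi b.rel 𝔐 (𝒯.e y) ≤ b.rel (𝒯.m 𝔐) y := by
  calc 𝒯.Txi b.rel 𝔐 (𝒯.e y) = 𝒯.tens (𝒯.Txi b.rel 𝔐 (𝒯.e y)) 𝒯.unit := (𝒯.tens_unit _).symm
    _ ≤ 𝒯.tens (𝒯.Txi b.rel 𝔐 (𝒯.e y)) (b.rel (𝒯.e y) y) := 𝒯.tens_mono_right (b.le_refl y)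
    _ ≤ 𝒯.kleisli b.rel b.rel (𝒯.m 𝔐) y := 𝒯.le_kleisli b.rel b.rel 𝔐 rfl (𝒯.e y)
    _ ≤ b.rel (𝒯.m 𝔐) y := b.comp _ y

/-- (i) ⇒ (ii): left adjoint `𝒯`-functors are cocontinuous. -/
lemma leftAdjoint_cocontinuous {𝒯 : TopTheory V T} {X Y : Type u} {a : 𝒯.TCatStr X}
    {b : 𝒯.TCatStr Y} {f : X → Y} (hla : IsLeftAdjoint a b f) : Cocontinuous a b f := by
  obtain ⟨hf, g, hg, hadj⟩ := hla
  intro A Z as cs h ψ g0 hh hψ hg0 hcol 𝔷 y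
  have e1 : modStar b (f ∘ g0) 𝔷 y = modStar a g0 𝔷 (g y) := by
    show b.rel (𝒯.map (f ∘ g0) 𝔷) y = a.rel (𝒯.map g0 𝔷) (g y)
    rw [𝒯.map_comp]
    exact adjoint_star hf hg hadj _ y
  rw [e1, hcol 𝔷 (g y)]
  simp only [TopTheory.extend]
  refine iInf_congr fun 𝔵 => ?_
  congr 1
  show a.rel (𝒯.map h 𝔵) (g y) = b.rel (𝒯.map (f ∘ h) 𝔵) y
  rw [𝒯.map_comp]
  exact (adjoint_star hf hg hadj _ y).symm

/-- (ii) ⇒ (i): cocontinuous functors out of a cocomplete `𝒯`-category are left adjoint. -/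
lemma cocontinuous_leftAdjoint {𝒯 : TopTheory V T} {X Y : Type u} {a : 𝒯.TCatStr X}
    {b : 𝒯.TCatStr Y} {f : X → Y} (ha : Cocomplete a) (hf : IsTFunctor a b f)
    (hc : Cocontinuous a b f) : IsLeftAdjoint a b f := by
  obtain ⟨g, hgf, hgcol⟩ :=
    ha X Y a b id (isTFunctor_id a) (modStar b f) (modStar_isMod hf)
  have hfcol := hc X Y a b id (modStar b f) g (isTFunctor_id a) (modStar_isMod hf) hgf hgcol
  have haux : ∀ (𝔵 : T X) (x' : X),
      a.rel (𝒯.map (fun x => g (f x)) 𝔵) x' ≤ a.rel 𝔵 x' := by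
    intro 𝔵 x'
    have h1 := hgcol (𝒯.map f 𝔵) x'
    have h2 : modStar a g (𝒯.map f 𝔵) x' = a.rel (𝒯.map (fun x => g (f x)) 𝔵) x' := by
      show a.rel (𝒯.map g (𝒯.map f 𝔵)) x' = _
      rw [← 𝒯.map_comp']
    rw [h2] at h1
    rw [h1]
    have h3 : extend 𝒯 (modStar a id) (modStar b f) (𝒯.map f 𝔵) x' ≤
        𝒯.ihom (⨆ 𝔛 : {𝔛 : T (T X) // 𝒯.m 𝔛 = 𝔵}, 𝒯.Txi (modStar b f) 𝔛.1 (𝒯.map f 𝔵))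
          (modStar a id 𝔵 x') :=
      iInf_le _ 𝔵
    have h4 : modStar a id 𝔵 x' = a.rel 𝔵 x' := by
      show a.rel (𝒯.map id 𝔵) x' = a.rel 𝔵 x'
      rw [𝒯.map_id, id_eq]
    rw [h4] at h3
    refine 𝒯.le_of_le_ihom ?_ h3
    refine le_trans ?_ (le_iSup (fun 𝔛 : {𝔛 : T (T X) // 𝒯.m 𝔛 = 𝔵} =>
      𝒯.Txi (modStar b f) 𝔛.1 (𝒯.map f 𝔵)) ⟨𝒯.map 𝒯.e 𝔵, 𝒯.m_map_e 𝔵⟩)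
    refine le_trans ?_ (𝒯.le_Txi (modStar b f) (𝒯.map (fun x => (𝒯.e x, f x)) 𝔵)
      (by rw [← 𝒯.map_comp']) (by rw [← 𝒯.map_comp']))
    rw [← 𝒯.map_comp']
    refine 𝒯.unit_le_xi _ 𝔵 fun x => ?_
    show 𝒯.unit ≤ b.rel (𝒯.map f (𝒯.e x)) (f x)
    rw [𝒯.e_nat]
    exact b.le_refl (f x)
  refine ⟨hf, g, hgf, fun 𝔵 x => ?_, fun 𝔶 y => ?_⟩
  · refine le_of_unit_le a ?_ 𝔵
    have := haux (𝒯.e x) (g (f x))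
    rw [𝒯.e_nat] at this
    exact le_trans (a.le_refl (g (f x))) this
  · refine le_of_unit_le b ?_ 𝔶
    have h1 := hfcol (𝒯.e y) y
    have h2 : modStar b (f ∘ g) (𝒯.e y) y = b.rel (𝒯.e (f (g y))) y := by
      show b.rel (𝒯.map (f ∘ g) (𝒯.e y)) y = _
      rw [𝒯.e_nat]
      rfl
    rw [h2] at h1
    rw [h1]
    refine le_iInf fun 𝔵 => 𝒯.unit_le_ihom ?_
    refine iSup_le fun 𝔛 => ?_
    refine le_trans (Txi_modStar_le b f 𝔛.1 (𝒯.e y)) ?_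
    refine le_trans (Txi_e_le b _ y) (le_of_eq ?_)
    show b.rel (𝒯.m (𝒯.map (𝒯.map f) 𝔛.1)) y = modStar b (f ∘ id) 𝔵 y
    rw [← 𝒯.m_nat, 𝔛.2]
    show b.rel (𝒯.map f 𝔵) y = b.rel (𝒯.map (f ∘ id) 𝔵) y
    rw [Function.comp_id]

lemma map_map (𝒯 : TopTheory V T) {X Y Z : Type u} (g : Y → Z) (f : X → Y) (𝔵 : T X) :
    𝒯.map g (𝒯.map f 𝔵) = 𝒯.map (fun x => g (f x)) 𝔵 :=
  (𝒯.map_comp g f 𝔵).symm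

/-- If the `h`-image of `𝔠` is principal at `y₀`, then `φ c (h c)` and `φ c y₀` have the
same `T`-image. -/
lemma fiber_e (𝒯 : TopTheory V T) {C Y0 D : Type u} (h : C → Y0) (φ : C → Y0 → D)
    (𝔠 : T C) (y₀ : Y0) (hc : 𝒯.map h 𝔠 = 𝒯.e y₀) :
    𝒯.map (fun c => φ c (h c)) 𝔠 = 𝒯.map (fun c => φ c y₀) 𝔠 := by
  obtain ⟨𝔰, h1, h2⟩ := 𝒯.map_bc h (Subtype.val : {z : Y0 // z = y₀} → Y0) 𝔠
    (𝒯.e ⟨y₀, rfl⟩) (by rw [𝒯.e_nat]; exact hc)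
  rw [← h1, 𝒯.map_map, 𝒯.map_map]
  congr 1
  funext s
  show φ s.1.1 (h s.1.1) = φ s.1.1 y₀
  rw [s.2, s.1.2.2]

/-- If the shape of `𝔛₀` collapses to a point, `ξ` of the `b`-distances to `y` is below
`b (m 𝔛₀) y`. -/
lemma xi_rel_mE {𝒯 : TopTheory V T} {Y : Type u} (b : 𝒯.TCatStr Y) (𝔛₀ : T (T Y)) (y : Y)
    (hc : 𝒯.map (fun _ => PUnit.unit) 𝔛₀ = 𝒯.e PUnit.unit) :
    𝒯.xi (𝒯.map (fun 𝔶' => b.rel 𝔶' y) 𝔛₀) ≤ b.rel (𝒯.m 𝔛₀) y := by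
  obtain ⟨𝔯, h1, h2⟩ := 𝒯.map_bc (fun _ : T Y => PUnit.unit) (fun _ : Y => PUnit.unit)
    𝔛₀ (𝒯.e y) (by rw [𝒯.e_nat]; exact hc)
  have key : 𝒯.map (fun 𝔶' => b.rel 𝔶' y) 𝔛₀ =
      𝒯.map (fun p : T Y × Y => b.rel p.1 p.2) (𝒯.map (fun r => (r.1.1, r.1.2)) 𝔯) := by
    rw [← h1, 𝒯.map_map, 𝒯.map_map]
    exact (𝒯.fiber_e (fun r => r.1.2) (fun r z => b.rel r.1.1 z) 𝔯 y h2).symm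
  have ha1 : 𝒯.map Prod.fst (𝒯.map (fun r => (r.1.1, r.1.2)) 𝔯) = 𝔛₀ := by
    rw [𝒯.map_map]; exact h1
  have ha2 : 𝒯.map Prod.snd (𝒯.map (fun r => (r.1.1, r.1.2)) 𝔯) = 𝒯.e y := by
    rw [𝒯.map_map]; exact h2
  exact le_trans (le_of_eq (congrArg 𝒯.xi key))
    (le_trans (𝒯.le_Txi b.rel (𝒯.map (fun r => (r.1.1, r.1.2)) 𝔯) ha1 ha2)
      (Txi_e_le b 𝔛₀ y))

/-- Presheaves are `ξ`-compatible over point-collapsing shapes. -/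
lemma presheaf_xi {𝒯 : TopTheory V T} {X : Type u} {a : 𝒯.TCatStr X} {τ : T X → V}
    (hτ : IsPresheaf a τ) (𝔛₁ : T (T X))
    (hc : 𝒯.map (fun _ => PUnit.unit) 𝔛₁ = 𝒯.e PUnit.unit) :
    𝒯.xi (𝒯.map τ 𝔛₁) ≤ τ (𝒯.m 𝔛₁) := by
  refine le_trans ?_ (hτ.2 (𝒯.m 𝔛₁) PUnit.unit)
  refine le_trans ?_
    (𝒯.le_kleisli (𝒯.unitRel PUnit) (fun 𝔵 _ => τ 𝔵) 𝔛₁ rfl (𝒯.e PUnit.unit))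
  have hu : 𝒯.unitRel PUnit (𝒯.e PUnit.unit) PUnit.unit = 𝒯.unit := by
    show (⨆ _ : 𝒯.e PUnit.unit = 𝒯.e PUnit.unit, 𝒯.unit) = 𝒯.unit
    exact iSup_pos rfl
  rw [hu, 𝒯.tens_unit]
  refine le_trans (le_of_eq ?_) (𝒯.le_Txi (fun (𝔵 : T X) (_ : PUnit.{u+1}) => τ 𝔵)
    (𝒯.map (fun 𝔵' => (𝔵', PUnit.unit)) 𝔛₁) ?_ ?_)
  · rw [𝒯.map_map]
  · rw [𝒯.map_map]; exact congrFun 𝒯.map_id 𝔛₁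
  · rw [𝒯.map_map]; exact hc

/-- `f^*(-, y)` is a presheaf. -/
lemma fstar_presheaf {𝒯 : TopTheory V T} {X Y : Type u} {a : 𝒯.TCatStr X}
    {b : 𝒯.TCatStr Y} {f : X → Y} (hf : IsTFunctor a b f) (y : Y) :
    IsPresheaf a (fun 𝔵 => b.rel (𝒯.map f 𝔵) y) := by
  constructor
  · intro 𝔵 u
    refine 𝒯.kleisli_le ?_
    intro 𝔛 h𝔛 𝔵mid
    refine le_trans (𝒯.tens_mono_left (𝒯.Txi_comp_le a.rel b.rel (𝒯.map f) f hf 𝔛 𝔵mid)) ?_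
    refine le_trans (𝒯.le_kleisli b.rel b.rel (𝒯.map (𝒯.map f) 𝔛)
      (by rw [← 𝒯.m_nat, h𝔛]) (𝒯.map f 𝔵mid)) ?_
    exact b.comp _ y
  · intro 𝔵 u
    cases u
    refine 𝒯.kleisli_le ?_
    intro 𝔛 h𝔛 𝔲
    by_cases h𝔲 : 𝔲 = 𝒯.e PUnit.unit
    · have hu : 𝒯.unitRel PUnit 𝔲 PUnit.unit = 𝒯.unit := by
        simp only [TopTheory.unitRel]
        rw [h𝔲]
        exact iSup_pos rfl
      rw [hu, 𝒯.tens_unit]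
      refine 𝒯.Txi_le ?_
      intro 𝔴 h1 h2
      have hw : 𝒯.map (fun p : T X × PUnit.{u+1} => b.rel (𝒯.map f p.1) y) 𝔴
          = 𝒯.map (fun 𝔶' => b.rel 𝔶' y) (𝒯.map (fun p : T X × PUnit.{u+1} => 𝒯.map f p.1) 𝔴) :=
        𝒯.map_comp' (fun 𝔶' => b.rel 𝔶' y) (fun p : T X × PUnit.{u+1} => 𝒯.map f p.1) 𝔴
      have hcon : 𝒯.map (fun _ => PUnit.unit)
          (𝒯.map (fun p : T X × PUnit.{u+1} => 𝒯.map f p.1) 𝔴) = 𝒯.e PUnit.unit := by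
        rw [𝒯.map_map]
        have h3 : (fun p : T X × PUnit.{u+1} => PUnit.unit) = Prod.snd := by
          funext p
          cases p.2
          rfl
        rw [h3, h2, h𝔲]
      refine le_trans (le_of_eq (congrArg 𝒯.xi hw)) ?_
      refine le_trans (xi_rel_mE b _ y hcon) (le_of_eq ?_)
      rw [show 𝒯.map (fun p : T X × PUnit.{u+1} => 𝒯.map f p.1) 𝔴
        = 𝒯.map (𝒯.map f) (𝒯.map Prod.fst 𝔴) from by rw [𝒯.map_map], h1, ← 𝒯.m_nat, h𝔛]
    · have hu : 𝒯.unitRel PUnit 𝔲 PUnit.unit = ⊥ := by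
        show (⨆ _ : 𝔲 = 𝒯.e PUnit.unit, 𝒯.unit) = ⊥
        exact iSup_neg h𝔲
      rw [hu, 𝒯.tens_bot]
      exact bot_le

/-! ### `powRel` lemmas -/

lemma powRel_le {𝒯 : TopTheory V T} {X : Type u} (𝔓 : T (T X → V)) (φ : T X → V)
    (𝔮 : T (T X × (T X → V))) (h : 𝒯.map Prod.snd 𝔮 = 𝔓) :
    𝒯.powRel X 𝔓 φ ≤
      𝒯.ihom (𝒯.xi (𝒯.map (fun p => p.2 p.1) 𝔮)) (φ (𝒯.m (𝒯.map Prod.fst 𝔮))) :=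
  by
    show (⨅ 𝔮' : {q : T (T X × (T X → V)) // 𝒯.map Prod.snd q = 𝔓},
      𝒯.ihom (𝒯.xi (𝒯.map (fun p => p.2 p.1) 𝔮'.1)) (φ (𝒯.m (𝒯.map Prod.fst 𝔮'.1)))) ≤ _
    exact iInf_le _ (⟨𝔮, h⟩ : {q : T (T X × (T X → V)) // 𝒯.map Prod.snd q = 𝔓})

lemma le_powRel {𝒯 : TopTheory V T} {X : Type u} {𝔓 : T (T X → V)} {φ : T X → V} {c : V}
    (h : ∀ 𝔮 : T (T X × (T X → V)), 𝒯.map Prod.snd 𝔮 = 𝔓 →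
      𝒯.tens (𝒯.xi (𝒯.map (fun p => p.2 p.1) 𝔮)) c ≤ φ (𝒯.m (𝒯.map Prod.fst 𝔮))) :
    c ≤ 𝒯.powRel X 𝔓 φ :=
  le_iInf fun 𝔮 => 𝒯.le_ihom (h 𝔮.1 𝔮.2)

lemma pow_e {𝒯 : TopTheory V T} {X : Type u} {a : 𝒯.TCatStr X} (σ τ : T X → V)
    (hτ : IsPresheaf a τ) (hστ : ∀ 𝔵, σ 𝔵 ≤ τ 𝔵) :
    𝒯.unit ≤ 𝒯.powRel X (𝒯.e σ) τ := by
  refine 𝒯.le_powRel fun 𝔮 h𝔮 => ?_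
  rw [𝒯.tens_unit]
  have h1 : 𝒯.map (fun p : T X × (T X → V) => p.2 p.1) 𝔮 = 𝒯.map (fun p => σ p.1) 𝔮 :=
    𝒯.fiber_e Prod.snd (fun p ρ => ρ p.1) 𝔮 σ h𝔮
  rw [h1, 𝒯.map_comp' σ Prod.fst]
  refine le_trans (𝒯.xi_mono _ _ hστ _) ?_
  refine presheaf_xi hτ _ ?_
  rw [𝒯.map_map]
  have h3 := 𝒯.map_comp' (fun _ : T X → V => PUnit.unit) Prod.snd 𝔮
  rw [h𝔮, 𝒯.e_nat] at h3
  exact h3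

/-- Yoneda lemma at a principal stage: `X̂(e (a(-,x)), φ) = φ (e x)`. -/
lemma pow_e_repr {𝒯 : TopTheory V T} {X : Type u} {a : 𝒯.TCatStr X} (x : X) (φ : T X → V)
    (hφ : ∀ (𝔵 : T X) (u : PUnit.{u+1}),
      𝒯.kleisli (fun 𝔵' (_ : PUnit.{u+1}) => φ 𝔵') a.rel 𝔵 u ≤ φ 𝔵) :
    𝒯.powRel X (𝒯.e (fun 𝔵' => a.rel 𝔵' x)) φ = φ (𝒯.e x) := by
  refine le_antisymm ?_ ?_
  · refine le_trans (𝒯.powRel_le _ φ (𝒯.e (𝒯.e x, fun 𝔵' => a.rel 𝔵' x))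
      (by rw [𝒯.e_nat])) ?_
    have h1 : 𝒯.xi (𝒯.map (fun p : T X × (T X → V) => p.2 p.1)
        (𝒯.e (𝒯.e x, fun 𝔵' => a.rel 𝔵' x))) = a.rel (𝒯.e x) x := by
      rw [𝒯.e_nat, 𝒯.xi_e]
    have h2 : 𝒯.m (𝒯.map Prod.fst (𝒯.e ((𝒯.e x, fun 𝔵' => a.rel 𝔵' x) :
        T X × (T X → V)))) = 𝒯.e x := by
      rw [𝒯.e_nat, 𝒯.m_e]
    rw [h1, h2]
    exact le_trans (𝒯.ihom_mono_left (a.le_refl x)) (le_of_eq (𝒯.ihom_unit _))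
  · refine 𝒯.le_powRel fun 𝔮 h𝔮 => ?_
    have h1 : 𝒯.map (fun p : T X × (T X → V) => p.2 p.1) 𝔮 =
        𝒯.map (fun p => a.rel p.1 x) 𝔮 :=
      𝒯.fiber_e Prod.snd (fun p ρ => ρ p.1) 𝔮 (fun 𝔵' => a.rel 𝔵' x) h𝔮
    have hcon : 𝒯.map (fun _ => PUnit.unit) (𝒯.map Prod.fst 𝔮) = 𝒯.e PUnit.unit := by
      rw [𝒯.map_map]
      have h3 := 𝒯.map_comp' (fun _ : T X → V => PUnit.unit) Prod.snd 𝔮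
      rw [h𝔮, 𝒯.e_nat] at h3
      exact h3
    have h3 : 𝒯.xi (𝒯.map (fun p : T X × (T X → V) => p.2 p.1) 𝔮) ≤
        a.rel (𝒯.m (𝒯.map Prod.fst 𝔮)) x := by
      rw [h1]
      refine le_trans (le_of_eq ?_) (xi_rel_mE a (𝒯.map Prod.fst 𝔮) x hcon)
      rw [𝒯.map_map]
    refine le_trans (𝒯.tens_mono_left h3) ?_
    refine le_trans ?_ (hφ (𝒯.m (𝒯.map Prod.fst 𝔮)) PUnit.unit)
    refine le_trans ?_ (𝒯.le_kleisli (fun 𝔵' (_ : PUnit.{u+1}) => φ 𝔵') a.rel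
      (𝒯.e (𝒯.m (𝒯.map Prod.fst 𝔮))) (𝒯.m_e _) (𝒯.e x))
    refine 𝒯.tens_mono_left ?_
    refine le_trans (le_of_eq ?_) (𝒯.le_Txi a.rel (𝒯.e (𝒯.m (𝒯.map Prod.fst 𝔮), x))
      (by rw [𝒯.e_nat]) (by rw [𝒯.e_nat]))
    rw [𝒯.e_nat, 𝒯.xi_e]

/-- The hat structure against a representable, in colimit form. -/
lemma pow_val_eq_inf {𝒯 : TopTheory V T} {X : Type u} (a : 𝒯.TCatStr X)
    (𝔭 : T (Hat a)) (φ : T X → V) :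
    𝒯.powRel X (𝒯.map Subtype.val 𝔭) φ =
      ⨅ 𝔵 : T X, 𝒯.ihom (⨆ 𝔛 : {𝔛 : T (T X) // 𝒯.m 𝔛 = 𝔵},
        𝒯.Txi (fun 𝔵' (ψ : Hat a) => ψ.1 𝔵') 𝔛.1 𝔭) (φ 𝔵) := by
  refine le_antisymm (le_iInf fun 𝔵 => 𝒯.le_ihom ?_) ?_
  · rw [𝒯.tens_iSup]
    refine iSup_le fun 𝔛 => ?_
    rw [TopTheory.Txi, 𝒯.tens_iSup]
    refine iSup_le fun 𝔴 => ?_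
    have hsnd : 𝒯.map Prod.snd (𝒯.map (fun p : T X × Hat a => (p.1, p.2.1)) 𝔴.1)
        = 𝒯.map Subtype.val 𝔭 := by
      have h4 := 𝒯.map_comp' (Subtype.val : Hat a → (T X → V)) Prod.snd 𝔴.1
      rw [𝒯.map_map]
      exact h4.trans (congrArg (𝒯.map (Subtype.val : Hat a → (T X → V))) 𝔴.2.2)
    have h3 : 𝒯.powRel X (𝒯.map Subtype.val 𝔭) φ ≤
        𝒯.ihom (𝒯.xi (𝒯.map (fun p : T X × Hat a => p.2.1 p.1) 𝔴.1)) (φ 𝔵) := by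
      refine le_trans (𝒯.powRel_le _ φ (𝒯.map (fun p : T X × Hat a => (p.1, p.2.1)) 𝔴.1)
        hsnd) (le_of_eq ?_)
      congr 1
      · rw [𝒯.map_map]
      · rw [𝒯.map_map, show 𝒯.map (fun p : T X × Hat a => (p.1, p.2.1).1) 𝔴.1
          = 𝒯.map Prod.fst 𝔴.1 from rfl, 𝔴.2.1, 𝔛.2]
    exact le_trans (𝒯.tens_mono_right h3) (𝒯.tens_ihom_le _ _)
  · refine 𝒯.le_powRel fun 𝔮 h𝔮 => ?_
    obtain ⟨𝔯, hr1, hr2⟩ := 𝒯.map_bc Prod.snd (Subtype.val : Hat a → (T X → V)) 𝔮 𝔭 h𝔮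
    have hxi : 𝒯.xi (𝒯.map (fun p : T X × (T X → V) => p.2 p.1) 𝔮) ≤
        𝒯.Txi (fun 𝔵' (ψ : Hat a) => ψ.1 𝔵') (𝒯.map Prod.fst 𝔮) 𝔭 := by
      refine le_trans (le_of_eq ?_)
        (𝒯.le_Txi (fun 𝔵' (ψ : Hat a) => ψ.1 𝔵')
          (𝒯.map (fun r => (r.1.1.1, r.1.2)) 𝔯) ?_ ?_)
      · rw [← hr1, 𝒯.map_map, 𝒯.map_map]
        exact congrArg 𝒯.xi
          (congrArg (fun F => 𝒯.map F 𝔯) (funext fun r => congrFun r.2 r.1.1.1))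
      · rw [𝒯.map_map, ← hr1, 𝒯.map_map]
      · rw [𝒯.map_map]
        exact hr2
    refine le_trans (𝒯.tens_mono_right (iInf_le _ (𝒯.m (𝒯.map Prod.fst 𝔮)))) ?_
    refine le_trans (𝒯.tens_mono_left (le_trans hxi
      (le_iSup (fun 𝔛 : {𝔛 : T (T X) // 𝒯.m 𝔛 = 𝒯.m (𝒯.map Prod.fst 𝔮)} =>
        𝒯.Txi (fun 𝔵' (ψ : Hat a) => ψ.1 𝔵') 𝔛.1 𝔭) ⟨𝒯.map Prod.fst 𝔮, rfl⟩))) ?_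
    exact 𝒯.tens_ihom_le _ _

/-- Evaluation is a `𝒯`-module `X ⇸∘ X̂`. -/
lemma ev_isMod {𝒯 : TopTheory V T} {X : Type u} (a : 𝒯.TCatStr X)
    (hsa : 𝒯.TCatStr (Hat a)) (hhsa : IsHatStr a hsa) :
    𝒯.IsTModRel a.rel hsa.rel (fun 𝔵 (ψ : Hat a) => ψ.1 𝔵) := by
  constructor
  · intro 𝔵 ψ
    exact ψ.2.1 𝔵 PUnit.unit
  · intro 𝔵 ψ
    refine 𝒯.kleisli_le ?_
    intro 𝔛 h𝔛 𝔭'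
    rw [hhsa 𝔭' ψ]
    rw [TopTheory.Txi, 𝒯.tens_iSup]
    refine iSup_le fun 𝔴 => ?_
    have hsnd : 𝒯.map Prod.snd (𝒯.map (fun p : T X × Hat a => (p.1, p.2.1)) 𝔴.1)
        = 𝒯.map Subtype.val 𝔭' := by
      have h4 := 𝒯.map_comp' (Subtype.val : Hat a → (T X → V)) Prod.snd 𝔴.1
      rw [𝒯.map_map]
      exact h4.trans (congrArg (𝒯.map (Subtype.val : Hat a → (T X → V))) 𝔴.2.2)
    have h3 : 𝒯.powRel X (𝒯.map Subtype.val 𝔭') ψ.1 ≤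
        𝒯.ihom (𝒯.xi (𝒯.map (fun p : T X × Hat a => p.2.1 p.1) 𝔴.1)) (ψ.1 𝔵) := by
      refine le_trans (𝒯.powRel_le _ ψ.1 (𝒯.map (fun p : T X × Hat a => (p.1, p.2.1)) 𝔴.1)
        hsnd) (le_of_eq ?_)
      congr 1
      · rw [𝒯.map_map]
      · rw [𝒯.map_map, show 𝒯.map (fun p : T X × Hat a => (p.1, p.2.1).1) 𝔴.1
          = 𝒯.map Prod.fst 𝔴.1 from rfl, 𝔴.2.1, h𝔛]
    exact le_trans (𝒯.tens_mono_right h3) (𝒯.tens_ihom_le _ _)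

/-- `Txi` interacts with `m` and `ξ` (flat-extension multiplication law). -/
lemma xi_Txi_le (𝒯 : TopTheory V T) {A B C : Type u} (r : A → B → V)
    (p : C → T A) (q : C → T B) (𝔠 : T C) :
    𝒯.xi (𝒯.map (fun c => 𝒯.Txi r (p c) (q c)) 𝔠) ≤
      𝒯.Txi r (𝒯.m (𝒯.map p 𝔠)) (𝒯.m (𝒯.map q 𝔠)) := by
  have claim : ∀ β : T A × T B, 𝒯.Txi r β.1 β.2 =
      ⨆ 𝔴 : {𝔴 : T (A × B) // (𝒯.map Prod.fst 𝔴, 𝒯.map Prod.snd 𝔴) = β},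
        𝒯.xi (𝒯.map (fun p' => r p'.1 p'.2) 𝔴.1) := by
    intro β
    refine le_antisymm (iSup_le fun 𝔴 => ?_) (iSup_le fun 𝔴 => ?_)
    · exact le_iSup (fun 𝔴' : {𝔴' : T (A × B) //
        (𝒯.map Prod.fst 𝔴', 𝒯.map Prod.snd 𝔴') = β} =>
        𝒯.xi (𝒯.map (fun p' => r p'.1 p'.2) 𝔴'.1)) ⟨𝔴.1, by rw [𝔴.2.1, 𝔴.2.2]⟩
    · exact le_iSup (fun 𝔴' : {𝔴' : T (A × B) //
        𝒯.map Prod.fst 𝔴' = β.1 ∧ 𝒯.map Prod.snd 𝔴' = β.2} =>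
        𝒯.xi (𝒯.map (fun p' => r p'.1 p'.2) 𝔴'.1))
        ⟨𝔴.1, congrArg Prod.fst 𝔴.2, congrArg Prod.snd 𝔴.2⟩
  have h0 : 𝒯.map (fun c => 𝒯.Txi r (p c) (q c)) 𝔠 =
      𝒯.map (fun β : T A × T B =>
        ⨆ 𝔴 : {𝔴 : T (A × B) //
          (fun 𝔴' : T (A × B) => (𝒯.map Prod.fst 𝔴', 𝒯.map Prod.snd 𝔴')) 𝔴 = β},
          𝒯.xi (𝒯.map (fun p' => r p'.1 p'.2) 𝔴.1)) (𝒯.map (fun c => (p c, q c)) 𝔠) := by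
    rw [𝒯.map_map]
    congr 1
    funext c
    exact claim (p c, q c)
  rw [h0, ← 𝒯.xi_nat (fun 𝔴 : T (A × B) => (𝒯.map Prod.fst 𝔴, 𝒯.map Prod.snd 𝔴))
    (fun 𝔴 => 𝒯.xi (𝒯.map (fun p' : A × B => r p'.1 p'.2) 𝔴))
    (𝒯.map (fun c => (p c, q c)) 𝔠)]
  refine iSup_le fun 𝔄 => ?_
  have h1 : 𝒯.xi (𝒯.map (fun 𝔴 : T (A × B) =>
      𝒯.xi (𝒯.map (fun p' : A × B => r p'.1 p'.2) 𝔴)) 𝔄.1)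
      = 𝒯.xi (𝒯.map (fun p' : A × B => r p'.1 p'.2) (𝒯.m 𝔄.1)) := by
    rw [𝒯.m_nat, 𝒯.xi_m, 𝒯.map_map]
  rw [h1]
  refine 𝒯.le_Txi r (𝒯.m 𝔄.1) ?_ ?_
  · rw [𝒯.m_nat]
    congr 1
    have h2 := congrArg (𝒯.map Prod.fst) 𝔄.2
    rw [𝒯.map_map, 𝒯.map_map] at h2
    exact h2
  · rw [𝒯.m_nat]
    congr 1
    have h2 := congrArg (𝒯.map Prod.snd) 𝔄.2
    rw [𝒯.map_map, 𝒯.map_map] at h2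
    exact h2

/-! ### `hatMapRel` bounds -/

lemma le_hatMapRel {𝒯 : TopTheory V T} {X Y : Type u} (b : 𝒯.TCatStr Y) (f : X → Y)
    (σ : T X → V) (𝔵' : T X) : σ 𝔵' ≤ hatMapRel b f σ (𝒯.map f 𝔵') := by
  show σ 𝔵' ≤ 𝒯.kleisli (fun 𝔵 (_ : PUnit.{u+1}) => σ 𝔵) (modCostar b f)
    (𝒯.map f 𝔵') PUnit.unit
  refine le_trans ?_ (𝒯.le_kleisli (fun 𝔵 (_ : PUnit.{u+1}) => σ 𝔵) (modCostar b f)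
    (𝒯.map (fun x => 𝒯.e (f x)) 𝔵') (by rw [𝒯.map_comp' 𝒯.e f, 𝒯.m_map_e]) 𝔵')
  have hT : 𝒯.unit ≤ 𝒯.Txi (modCostar b f) (𝒯.map (fun x => 𝒯.e (f x)) 𝔵') 𝔵' := by
    refine le_trans ?_ (𝒯.le_Txi (modCostar b f) (𝒯.map (fun x => (𝒯.e (f x), x)) 𝔵')
      (by rw [𝒯.map_map]) (by rw [𝒯.map_map]; exact congrFun 𝒯.map_id 𝔵'))
    refine le_trans (𝒯.unit_le_xi (fun x => b.rel (𝒯.e (f x)) (f x)) 𝔵'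
      (fun x => b.le_refl (f x))) (le_of_eq ?_)
    rw [𝒯.map_map]
    rfl
  calc σ 𝔵' = 𝒯.tens 𝒯.unit (σ 𝔵') := (𝒯.unit_tens _).symm
    _ ≤ _ := 𝒯.tens_mono_left hT

lemma hatMapRel_le {𝒯 : TopTheory V T} {X Y : Type u} (b : 𝒯.TCatStr Y) (f : X → Y)
    (σ : T X → V) (y : Y) (hσ : ∀ 𝔵'', σ 𝔵'' ≤ b.rel (𝒯.map f 𝔵'') y) (𝔶' : T Y) :
    hatMapRel b f σ 𝔶' ≤ b.rel 𝔶' y := by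
  show 𝒯.kleisli (fun 𝔵 (_ : PUnit.{u+1}) => σ 𝔵) (modCostar b f) 𝔶' PUnit.unit ≤ _
  refine 𝒯.kleisli_le ?_
  intro 𝔜 h𝔜 𝔵''
  refine le_trans (𝒯.tens_mono_left (Txi_modCostar_le b f 𝔜 𝔵'')) ?_
  refine le_trans (𝒯.tens_mono_right (hσ 𝔵'')) ?_
  exact le_trans (𝒯.le_kleisli b.rel b.rel 𝔜 h𝔜 (𝒯.map f 𝔵'')) (b.comp 𝔶' y)

/-- Equality of `(-)_*` implies `FunEquiv`. -/
lemma funEquiv_of_star_eq {𝒯 : TopTheory V T} {Z Y : Type u} {b : 𝒯.TCatStr Y}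
    {h h' : Z → Y} (he : ∀ (𝔭 : T Z) (y : Y),
      b.rel (𝒯.map h 𝔭) y = b.rel (𝒯.map h' 𝔭) y) : FunEquiv b h h' := by
  intro 𝔶 z
  have h1 : 𝒯.unit ≤ b.rel (𝒯.e (h z)) (h' z) := by
    have h0 := he (𝒯.e z) (h' z)
    rw [𝒯.e_nat, 𝒯.e_nat] at h0
    rw [h0]
    exact b.le_refl (h' z)
  have h2 : 𝒯.unit ≤ b.rel (𝒯.e (h' z)) (h z) := by
    have h0 := he (𝒯.e z) (h z)
    rw [𝒯.e_nat, 𝒯.e_nat] at h0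
    rw [← h0]
    exact b.le_refl (h z)
  exact le_antisymm (le_of_unit_le b h1 𝔶) (le_of_unit_le b h2 𝔶)

/-- Data for decomposing `f̂`-images of presheaves. -/
def hatDat (𝒯 : TopTheory V T) {X : Type u} (Y : Type u) (a : 𝒯.TCatStr X) : Type u :=
  {q : (T Y × Hat a) × (T (T Y) × T X) // 𝒯.m q.2.1 = q.1.1}

/-- The value associated to a piece of `hatDat`. -/
def hatPhi {𝒯 : TopTheory V T} {X Y : Type u} {a : 𝒯.TCatStr X} (b : 𝒯.TCatStr Y)
    (f : X → Y) (q : hatDat 𝒯 Y a) : V :=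
  𝒯.tens (𝒯.Txi (modCostar b f) q.1.2.1 q.1.2.2) (q.1.1.2.1 q.1.2.2)

lemma hatMapRel_eq_iSup {𝒯 : TopTheory V T} {X Y : Type u} {a : 𝒯.TCatStr X}
    (b : 𝒯.TCatStr Y) (f : X → Y) (p : T Y × Hat a) :
    hatMapRel b f p.2.1 p.1 =
      ⨆ q : {q : hatDat 𝒯 Y a // q.1.1 = p}, hatPhi b f q.1 := by
  refine le_antisymm ?_ ?_
  · show 𝒯.kleisli (fun 𝔵 (_ : PUnit.{u+1}) => p.2.1 𝔵) (modCostar b f) p.1 PUnit.unit ≤ _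
    refine 𝒯.kleisli_le fun 𝔜 h𝔜 𝔵'' => ?_
    exact le_iSup (fun q : {q : hatDat 𝒯 Y a // q.1.1 = p} => hatPhi b f q.1)
      ⟨⟨⟨p, (𝔜, 𝔵'')⟩, h𝔜⟩, rfl⟩
  · refine iSup_le fun q => ?_
    obtain ⟨⟨⟨pb, pd⟩, hm'⟩, hπ⟩ := q
    cases hπ
    exact 𝒯.le_kleisli (fun 𝔵 (_ : PUnit.{u+1}) => pb.2.1 𝔵) (modCostar b f) pd.1 hm' pd.2

/-- The distance in `Ŷ` from `T f̂ 𝔭` to the representable at `y`, in `X`-terms. -/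
lemma pow_fh_eq {𝒯 : TopTheory V T} {X Y : Type u} {a : 𝒯.TCatStr X} {b : 𝒯.TCatStr Y}
    {f : X → Y} {fh : Hat a → Hat b} (hfh : IsHatMap a b f fh)
    (𝔭 : T (Hat a)) (y : Y) :
    𝒯.powRel Y (𝒯.map Subtype.val (𝒯.map fh 𝔭)) (fun 𝔶' => b.rel 𝔶' y) =
      ⨅ 𝔵 : T X, 𝒯.ihom (⨆ 𝔛 : {𝔛 : T (T X) // 𝒯.m 𝔛 = 𝔵},
        𝒯.Txi (fun 𝔵' (ψ : Hat a) => ψ.1 𝔵') 𝔛.1 𝔭) (b.rel (𝒯.map f 𝔵) y) := by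
  have hP : 𝒯.map Subtype.val (𝒯.map fh 𝔭) =
      𝒯.map (fun ψ : Hat a => hatMapRel b f ψ.1) 𝔭 := by
    refine (𝒯.map_map _ _ _).trans ?_
    exact congrArg (fun F => 𝒯.map F 𝔭)
      (funext fun ψ => funext fun 𝔶' => hfh ψ 𝔶')
  refine le_antisymm (le_iInf fun 𝔵 => 𝒯.le_ihom ?_) ?_
  · rw [𝒯.tens_iSup]
    refine iSup_le fun 𝔛 => ?_
    rw [TopTheory.Txi, 𝒯.tens_iSup]
    refine iSup_le fun 𝔴 => ?_
    have hsnd : 𝒯.map Prod.snd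
        (𝒯.map (fun p : T X × Hat a => (𝒯.map f p.1, hatMapRel b f p.2.1)) 𝔴.1)
        = 𝒯.map Subtype.val (𝒯.map fh 𝔭) := by
      rw [hP, 𝒯.map_map]
      have h4 := 𝒯.map_comp' (fun ψ : Hat a => hatMapRel b f ψ.1) Prod.snd 𝔴.1
      exact h4.trans (congrArg (𝒯.map (fun ψ : Hat a => hatMapRel b f ψ.1)) 𝔴.2.2)
    have hm : 𝒯.m (𝒯.map Prod.fst
        (𝒯.map (fun p : T X × Hat a => (𝒯.map f p.1, hatMapRel b f p.2.1)) 𝔴.1))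
        = 𝒯.map f 𝔵 := by
      rw [𝒯.map_map, show 𝒯.map (fun p : T X × Hat a =>
        (𝒯.map f p.1, hatMapRel b f p.2.1).1) 𝔴.1
        = 𝒯.map (𝒯.map f) (𝒯.map Prod.fst 𝔴.1) from by rw [𝒯.map_map],
        𝔴.2.1, ← 𝒯.m_nat, 𝔛.2]
    have hval : 𝒯.xi (𝒯.map (fun p : T X × Hat a => p.2.1 p.1) 𝔴.1) ≤
        𝒯.xi (𝒯.map (fun p : T Y × (T Y → V) => p.2 p.1)
          (𝒯.map (fun p : T X × Hat a => (𝒯.map f p.1, hatMapRel b f p.2.1)) 𝔴.1)) := by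
      rw [𝒯.map_map]
      exact 𝒯.xi_mono _ _ (fun p => le_hatMapRel b f p.2.1 p.1) 𝔴.1
    refine le_trans (𝒯.tens_mono_right (le_trans
      (𝒯.powRel_le _ _ _ hsnd) (le_of_eq (by rw [hm])))) ?_
    exact le_trans (𝒯.tens_mono_left hval) (𝒯.tens_ihom_le _ _)
  · refine 𝒯.le_powRel fun 𝔮 h𝔮 => ?_
    obtain ⟨𝔯, hr1, hr2⟩ := 𝒯.map_bc Prod.snd (fun ψ : Hat a => hatMapRel b f ψ.1) 𝔮 𝔭
      (h𝔮.trans hP)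
    have h𝔟 : 𝒯.map (fun p : T Y × (T Y → V) => p.2 p.1) 𝔮 =
        𝒯.map (fun p : T Y × Hat a => hatMapRel b f p.2.1 p.1)
          (𝒯.map (fun r => (r.1.1.1, r.1.2)) 𝔯) := by
      rw [← hr1, 𝒯.map_map, 𝒯.map_map]
      exact congrArg (fun F => 𝒯.map F 𝔯) (funext fun r => congrFun r.2 r.1.1.1)
    have hnat := 𝒯.xi_nat (fun q : hatDat 𝒯 Y a => q.1.1) (hatPhi b f)
      (𝒯.map (fun r => (r.1.1.1, r.1.2)) 𝔯)
    have hev : 𝒯.xi (𝒯.map (fun p : T Y × (T Y → V) => p.2 p.1) 𝔮) =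
        ⨆ 𝔞 : {𝔞 : T (hatDat 𝒯 Y a) //
          𝒯.map (fun q : hatDat 𝒯 Y a => q.1.1) 𝔞 = 𝒯.map (fun r => (r.1.1.1, r.1.2)) 𝔯},
          𝒯.xi (𝒯.map (hatPhi b f) 𝔞.1) := by
      rw [h𝔟, show (fun p : T Y × Hat a => hatMapRel b f p.2.1 p.1)
        = (fun p : T Y × Hat a => ⨆ q : {q : hatDat 𝒯 Y a // q.1.1 = p}, hatPhi b f q.1)
        from funext fun p => hatMapRel_eq_iSup b f p]
      exact hnat.symm
    rw [hev, 𝒯.tens_iSup]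
    refine iSup_le fun 𝔞 => ?_
    have htens : 𝒯.xi (𝒯.map (hatPhi b f) 𝔞.1) =
        𝒯.tens (𝒯.xi (𝒯.map (fun q : hatDat 𝒯 Y a =>
            𝒯.Txi (modCostar b f) q.1.2.1 q.1.2.2) 𝔞.1))
          (𝒯.xi (𝒯.map (fun q : hatDat 𝒯 Y a => q.1.1.2.1 q.1.2.2) 𝔞.1)) := by
      have h5 := 𝒯.xi_tens (𝒯.map (fun q : hatDat 𝒯 Y a =>
        (𝒯.Txi (modCostar b f) q.1.2.1 q.1.2.2, q.1.1.2.1 q.1.2.2)) 𝔞.1)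
      rw [𝒯.map_map, 𝒯.map_map, 𝒯.map_map] at h5
      exact h5
    have hv : 𝒯.xi (𝒯.map (fun q : hatDat 𝒯 Y a => q.1.1.2.1 q.1.2.2) 𝔞.1) ≤
        ⨆ 𝔛 : {𝔛 : T (T X) //
            𝒯.m 𝔛 = 𝒯.m (𝒯.map (fun q : hatDat 𝒯 Y a => q.1.2.2) 𝔞.1)},
          𝒯.Txi (fun 𝔵' (ψ : Hat a) => ψ.1 𝔵') 𝔛.1 𝔭 := by
      refine le_trans (le_of_eq ?_) (le_trans
        (𝒯.le_Txi (fun 𝔵' (ψ : Hat a) => ψ.1 𝔵')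
          (𝒯.map (fun q : hatDat 𝒯 Y a => (q.1.2.2, q.1.1.2)) 𝔞.1) ?_ ?_)
        (le_iSup (fun 𝔛 : {𝔛 : T (T X) //
            𝒯.m 𝔛 = 𝒯.m (𝒯.map (fun q : hatDat 𝒯 Y a => q.1.2.2) 𝔞.1)} =>
          𝒯.Txi (fun 𝔵' (ψ : Hat a) => ψ.1 𝔵') 𝔛.1 𝔭)
          ⟨𝒯.map (fun q : hatDat 𝒯 Y a => q.1.2.2) 𝔞.1, rfl⟩))
      · rw [𝒯.map_map]
      · rw [𝒯.map_map]
      · rw [𝒯.map_map]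
        have h5 := 𝒯.map_comp' Prod.snd (fun q : hatDat 𝒯 Y a => q.1.1) 𝔞.1
        have h6 := 𝒯.map_comp' Prod.snd (fun r => (r.1.1.1, r.1.2)) 𝔯
        exact h5.trans ((congrArg (𝒯.map Prod.snd) 𝔞.2).trans (h6.symm.trans hr2))
    have hu2 : 𝒯.xi (𝒯.map (fun q : hatDat 𝒯 Y a =>
        𝒯.Txi (modCostar b f) q.1.2.1 q.1.2.2) 𝔞.1) ≤
        𝒯.Txi b.rel (𝒯.m (𝒯.map (fun q : hatDat 𝒯 Y a => q.1.2.1) 𝔞.1))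
          (𝒯.map f (𝒯.m (𝒯.map (fun q : hatDat 𝒯 Y a => q.1.2.2) 𝔞.1))) := by
      refine le_trans (𝒯.xi_mono _ (fun q : hatDat 𝒯 Y a =>
        𝒯.Txi b.rel q.1.2.1 (𝒯.map f q.1.2.2))
        (fun q => Txi_modCostar_le b f q.1.2.1 q.1.2.2) 𝔞.1) ?_
      refine le_trans (𝒯.xi_Txi_le b.rel (fun q : hatDat 𝒯 Y a => q.1.2.1)
        (fun q : hatDat 𝒯 Y a => 𝒯.map f q.1.2.2) 𝔞.1) (le_of_eq ?_)
      rw [show 𝒯.map (fun q : hatDat 𝒯 Y a => 𝒯.map f q.1.2.2) 𝔞.1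
        = 𝒯.map (𝒯.map f) (𝒯.map (fun q : hatDat 𝒯 Y a => q.1.2.2) 𝔞.1)
        from by rw [𝒯.map_map], ← 𝒯.m_nat]
    have hY : 𝒯.m (𝒯.m (𝒯.map (fun q : hatDat 𝒯 Y a => q.1.2.1) 𝔞.1)) =
        𝒯.m (𝒯.map Prod.fst 𝔮) := by
      rw [𝒯.m_assoc]
      congr 1
      rw [𝒯.map_map]
      have hfn : (fun q : hatDat 𝒯 Y a => 𝒯.m q.1.2.1) =
          (fun q : hatDat 𝒯 Y a => q.1.1.1) := funext fun q => q.2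
      rw [hfn]
      have h8 := 𝒯.map_comp' Prod.fst (fun q : hatDat 𝒯 Y a => q.1.1) 𝔞.1
      have h9 := 𝒯.map_comp' Prod.fst (fun r => (r.1.1.1, r.1.2)) 𝔯
      have h10 := 𝒯.map_comp' Prod.fst (fun r => r.1.1) 𝔯
      exact h8.trans ((congrArg (𝒯.map Prod.fst) 𝔞.2).trans
        (h9.symm.trans (h10.trans (congrArg (𝒯.map Prod.fst) hr1))))
    rw [htens, 𝒯.tens_assoc]
    refine le_trans (𝒯.tens_mono_right (le_trans (𝒯.tens_mono_right
      (iInf_le _ (𝒯.m (𝒯.map (fun q : hatDat 𝒯 Y a => q.1.2.2) 𝔞.1))))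
      (le_trans (𝒯.tens_mono_left hv) (𝒯.tens_ihom_le _ _)))) ?_
    refine le_trans (𝒯.tens_mono_left hu2) ?_
    exact le_trans (𝒯.le_kleisli b.rel b.rel
      (𝒯.m (𝒯.map (fun q : hatDat 𝒯 Y a => q.1.2.1) 𝔞.1)) hY
      (𝒯.map f (𝒯.m (𝒯.map (fun q : hatDat 𝒯 Y a => q.1.2.2) 𝔞.1)))) (b.comp _ y)

lemma hat_rel_ya {𝒯 : TopTheory V T} {X : Type u} {a : 𝒯.TCatStr X}
    {hsa : 𝒯.TCatStr (Hat a)} (hhsa : IsHatStr a hsa) {ya : X → Hat a}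
    (hya : IsYoneda a ya) (𝔭 : T (Hat a)) (x : X) :
    hsa.rel 𝔭 (ya x) = ⨅ 𝔵 : T X, 𝒯.ihom (⨆ 𝔛 : {𝔛 : T (T X) // 𝒯.m 𝔛 = 𝔵},
      𝒯.Txi (fun 𝔵' (ψ : Hat a) => ψ.1 𝔵') 𝔛.1 𝔭) (a.rel 𝔵 x) := by
  rw [hhsa 𝔭 (ya x), pow_val_eq_inf a 𝔭 (ya x).1]
  exact iInf_congr fun 𝔵 => by rw [hya x 𝔵]

/-- `Sup_X` is the `ev`-weighted colimit of the identity. -/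
lemma supX_colimit {𝒯 : TopTheory V T} {X : Type u} {a : 𝒯.TCatStr X}
    {hsa : 𝒯.TCatStr (Hat a)} (hhsa : IsHatStr a hsa) {ya : X → Hat a}
    (hya : IsYoneda a ya) (hyaf : IsTFunctor a hsa ya) {SupX : Hat a → X}
    (hSX : IsTFunctor hsa a SupX) (hSXadj : IsAdjunction hsa a SupX ya) :
    IsColimit a id (fun 𝔵 (ψ : Hat a) => ψ.1 𝔵) SupX := by
  intro 𝔭 x
  have h1 : modStar a SupX 𝔭 x = hsa.rel 𝔭 (ya x) := adjoint_star hSX hyaf hSXadj 𝔭 x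
  rw [h1, hat_rel_ya hhsa hya 𝔭 x]
  simp only [TopTheory.extend]
  refine iInf_congr fun 𝔵 => ?_
  congr 1
  show a.rel 𝔵 x = a.rel (𝒯.map id 𝔵) x
  rw [𝒯.map_id, id_eq]

/-- (ii) ⇒ (iii). -/
lemma cocontinuous_funEquiv {𝒯 : TopTheory V T} {X Y : Type u}
    {a : 𝒯.TCatStr X} {b : 𝒯.TCatStr Y}
    {hsa : 𝒯.TCatStr (Hat a)} (hhsa : IsHatStr a hsa)
    {hsb : 𝒯.TCatStr (Hat b)} (hhsb : IsHatStr b hsb)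
    {ya : X → Hat a} (hya : IsYoneda a ya) (hyaf : IsTFunctor a hsa ya)
    {yb : Y → Hat b} (hyb : IsYoneda b yb) (hybf : IsTFunctor b hsb yb)
    {SupX : Hat a → X} (hSX : IsTFunctor hsa a SupX)
    (hSXadj : IsAdjunction hsa a SupX ya)
    {SupY : Hat b → Y} (hSY : IsTFunctor hsb b SupY)
    (hSYadj : IsAdjunction hsb b SupY yb)
    {f : X → Y} {fh : Hat a → Hat b} (hfh : IsHatMap a b f fh)
    (hc : Cocontinuous a b f) :
    FunEquiv b (f ∘ SupX) (SupY ∘ fh) := by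
  have hBcol : IsColimit a id (fun 𝔵 (ψ : Hat a) => ψ.1 𝔵) SupX :=
    supX_colimit hhsa hya hyaf hSX hSXadj
  have hfcol := hc X (Hat a) a hsa id (fun 𝔵 (ψ : Hat a) => ψ.1 𝔵) SupX
    (isTFunctor_id a) (ev_isMod a hsa hhsa) hSX hBcol
  refine funEquiv_of_star_eq fun 𝔭 y => ?_
  have h1 := hfcol 𝔭 y
  rw [show b.rel (𝒯.map (f ∘ SupX) 𝔭) y = modStar b (f ∘ SupX) 𝔭 y from rfl, h1]
  have h2 : b.rel (𝒯.map (SupY ∘ fh) 𝔭) y =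
      𝒯.powRel Y (𝒯.map Subtype.val (𝒯.map fh 𝔭)) (yb y).1 := by
    rw [𝒯.map_comp]
    have h5 := adjoint_star hSY hybf hSYadj (𝒯.map fh 𝔭) y
    rw [h5, hhsb (𝒯.map fh 𝔭) (yb y)]
    rfl
  rw [h2, show (yb y).1 = fun 𝔶' => b.rel 𝔶' y from funext fun 𝔶' => hyb y 𝔶',
    pow_fh_eq hfh 𝔭 y]
  simp only [TopTheory.extend]
  refine iInf_congr fun 𝔵 => ?_
  congr 1

lemma jstar_functor {𝒯 : TopTheory V T} {X Y : Type u} {a : 𝒯.TCatStr X}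
    {b : 𝒯.TCatStr Y} {hsa : 𝒯.TCatStr (Hat a)} (hhsa : IsHatStr a hsa)
    {f : X → Y} (j : Y → Hat a)
    (hjval : ∀ (y : Y) (𝔵 : T X), (j y).1 𝔵 = b.rel (𝒯.map f 𝔵) y) :
    IsTFunctor b hsa j := by
  intro 𝔶 y
  rw [hhsa (𝒯.map j 𝔶) (j y)]
  refine 𝒯.le_powRel fun 𝔮 h𝔮 => ?_
  have hval : 𝒯.map Subtype.val (𝒯.map j 𝔶) =
      𝒯.map (fun y' : Y => fun 𝔵' : T X => b.rel (𝒯.map f 𝔵') y') 𝔶 := by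
    refine (𝒯.map_map _ _ _).trans ?_
    exact congrArg (fun F => 𝒯.map F 𝔶)
      (funext fun y' => funext fun 𝔵' => hjval y' 𝔵')
  obtain ⟨𝔯, hr1, hr2⟩ := 𝒯.map_bc Prod.snd
    (fun y' : Y => fun 𝔵' : T X => b.rel (𝒯.map f 𝔵') y') 𝔮 𝔶 (h𝔮.trans hval)
  have hT : 𝒯.xi (𝒯.map (fun p : T X × (T X → V) => p.2 p.1) 𝔮) ≤
      𝒯.Txi b.rel (𝒯.map (𝒯.map f) (𝒯.map Prod.fst 𝔮)) 𝔶 := by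
    have hev : 𝒯.map (fun p : T X × (T X → V) => p.2 p.1) 𝔮 =
        𝒯.map (fun p : T Y × Y => b.rel p.1 p.2)
          (𝒯.map (fun r => (𝒯.map f r.1.1.1, r.1.2)) 𝔯) := by
      rw [← hr1, 𝒯.map_map, 𝒯.map_map]
      exact congrArg (fun F => 𝒯.map F 𝔯) (funext fun r => congrFun r.2 r.1.1.1)
    refine le_trans (le_of_eq (congrArg 𝒯.xi hev)) (𝒯.le_Txi b.rel
      (𝒯.map (fun r => (𝒯.map f r.1.1.1, r.1.2)) 𝔯) ?_ ?_)
    · rw [𝒯.map_map, ← hr1, 𝒯.map_map, 𝒯.map_map]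
    · rw [𝒯.map_map]
      exact hr2
  rw [hjval y (𝒯.m (𝒯.map Prod.fst 𝔮))]
  refine le_trans (𝒯.tens_mono_left hT) ?_
  exact le_trans (𝒯.le_kleisli b.rel b.rel (𝒯.map (𝒯.map f) (𝒯.map Prod.fst 𝔮))
    (𝒯.m_nat f (𝒯.map Prod.fst 𝔮)).symm 𝔶) (b.comp _ y)

/-- (iii) ⇒ (i). -/
lemma funEquiv_leftAdjoint {𝒯 : TopTheory V T} {X Y : Type u}
    {a : 𝒯.TCatStr X} {b : 𝒯.TCatStr Y}
    {hsa : 𝒯.TCatStr (Hat a)} (hhsa : IsHatStr a hsa)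
    {hsb : 𝒯.TCatStr (Hat b)} (hhsb : IsHatStr b hsb)
    {ya : X → Hat a} (hya : IsYoneda a ya) (hyaf : IsTFunctor a hsa ya)
    {yb : Y → Hat b} (hyb : IsYoneda b yb) (hybf : IsTFunctor b hsb yb)
    {SupX : Hat a → X} (hSX : IsTFunctor hsa a SupX)
    (hSXadj : IsAdjunction hsa a SupX ya)
    {SupY : Hat b → Y} (hSY : IsTFunctor hsb b SupY)
    (hSYadj : IsAdjunction hsb b SupY yb)
    {f : X → Y} (hf : IsTFunctor a b f) {fh : Hat a → Hat b} (hfh : IsHatMap a b f fh)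
    (h3 : FunEquiv b (f ∘ SupX) (SupY ∘ fh)) : IsLeftAdjoint a b f := by
  have hjval : ∀ (y : Y) (𝔵 : T X),
      ((⟨fun 𝔵' => b.rel (𝒯.map f 𝔵') y, fstar_presheaf hf y⟩ : Hat a)).1 𝔵 =
        b.rel (𝒯.map f 𝔵) y := fun y 𝔵 => rfl
  have hjf : IsTFunctor b hsa
      (fun y => (⟨fun 𝔵' => b.rel (𝒯.map f 𝔵') y, fstar_presheaf hf y⟩ : Hat a)) :=
    jstar_functor hhsa _ hjval
  refine ⟨hf, fun y => SupX (⟨fun 𝔵' => b.rel (𝒯.map f 𝔵') y, fstar_presheaf hf y⟩ : Hat a),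
    fun 𝔶 y => ?_, fun 𝔵 x => ?_, fun 𝔶 y => ?_⟩
  · -- g is a 𝒯-functor
    exact isTFunctor_comp hjf hSX 𝔶 y
  · -- unit
    refine le_of_unit_le a ?_ 𝔵
    have hYl : ∀ x' : X, hsa.rel (𝒯.e (ya x)) (ya x') = a.rel (𝒯.e x) x' := by
      intro x'
      rw [hhsa (𝒯.e (ya x)) (ya x')]
      refine (congrArg (fun P => 𝒯.powRel X P _) (𝒯.e_nat Subtype.val (ya x))).trans ?_
      rw [show (ya x).1 = fun 𝔵' => a.rel 𝔵' x from funext fun 𝔵' => hya x 𝔵',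
        pow_e_repr x (ya x').1 (ya x').2.1]
      exact hya x' (𝒯.e x)
    have h5 : 𝒯.unit ≤ hsa.rel (𝒯.e (ya x))
        (⟨fun 𝔵' => b.rel (𝒯.map f 𝔵') (f x), fstar_presheaf hf (f x)⟩ : Hat a) := by
      rw [hhsa (𝒯.e (ya x)) (⟨fun 𝔵' => b.rel (𝒯.map f 𝔵') (f x), fstar_presheaf hf (f x)⟩ : Hat a)]
      refine le_of_le_of_eq ?_ (congrArg (fun P => 𝒯.powRel X P _) (𝒯.e_nat Subtype.val (ya x))).symm
      rw [show (ya x).1 = fun 𝔵' => a.rel 𝔵' x from funext fun 𝔵' => hya x 𝔵']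
      exact pow_e _ _ (fstar_presheaf hf (f x)) (fun 𝔵' => hf 𝔵' x)
    have h6 := le_trans h5 (hSXadj.1 (𝒯.e (ya x)) _)
    rw [hYl] at h6
    exact h6
  · -- counit
    refine le_trans (le_of_eq
      (h3 𝔶 (⟨fun 𝔵' => b.rel (𝒯.map f 𝔵') y, fstar_presheaf hf y⟩ : Hat a))) ?_
    have h7 : 𝒯.unit ≤ hsb.rel
        (𝒯.e (fh (⟨fun 𝔵' => b.rel (𝒯.map f 𝔵') y, fstar_presheaf hf y⟩ : Hat a))) (yb y) := by
      rw [hhsb]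
      refine le_of_le_of_eq ?_ (congrArg (fun P => 𝒯.powRel Y P _) (𝒯.e_nat Subtype.val
        (fh (⟨fun 𝔵' => b.rel (𝒯.map f 𝔵') y, fstar_presheaf hf y⟩ : Hat a)))).symm
      rw [show (fh (⟨fun 𝔵' => b.rel (𝒯.map f 𝔵') y, fstar_presheaf hf y⟩ : Hat a)).1
          = hatMapRel b f (fun 𝔵' => b.rel (𝒯.map f 𝔵') y)
          from funext fun 𝔶' => hfh _ 𝔶']
      refine pow_e _ (yb y).1 ((yb y).2) ?_
      intro 𝔶'
      rw [show (yb y).1 𝔶' = b.rel 𝔶' y from hyb y 𝔶']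
      exact hatMapRel_le b f _ y (fun 𝔵'' => le_refl _) 𝔶'
    have h9 : 𝒯.unit ≤ b.rel
        (𝒯.e (SupY (fh (⟨fun 𝔵' => b.rel (𝒯.map f 𝔵') y, fstar_presheaf hf y⟩ : Hat a))))
        (SupY (yb y)) := by
      have h10 := hSY
        (𝒯.e (fh (⟨fun 𝔵' => b.rel (𝒯.map f 𝔵') y, fstar_presheaf hf y⟩ : Hat a))) (yb y)
      rw [𝒯.e_nat] at h10
      exact le_trans h7 h10
    exact le_trans (le_of_unit_le b h9 𝔶) (hSYadj.2 𝔶 y)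

end Lemmas

/-- Proposition 4.1. Let `f : X → Y` be a `𝒯`-functor between
cocomplete `𝒯`-categories and let `Sup_X ⊣ y_X`, `Sup_Y ⊣ y_Y` be the left adjoints of
the Yoneda functors. The following are equivalent: (i) `f` is left adjoint; (ii) `f` is
cocontinuous; (iii) `f · Sup_X ≅ Sup_Y · f̂`. -/
theorem statement5 (𝒯 : TopTheory V T) {X Y : Type u}
    (a : 𝒯.TCatStr X) (b : 𝒯.TCatStr Y)
    (hsa : 𝒯.TCatStr (Hat a)) (hhsa : IsHatStr a hsa)
    (hsb : 𝒯.TCatStr (Hat b)) (hhsb : IsHatStr b hsb)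
    (ya : X → Hat a) (hya : IsYoneda a ya) (hyaf : IsTFunctor a hsa ya)
    (yb : Y → Hat b) (hyb : IsYoneda b yb) (hybf : IsTFunctor b hsb yb)
    (ha : Cocomplete a) (hb : Cocomplete b)
    (SupX : Hat a → X) (hSX : IsTFunctor hsa a SupX) (hSXadj : IsAdjunction hsa a SupX ya)
    (SupY : Hat b → Y) (hSY : IsTFunctor hsb b SupY) (hSYadj : IsAdjunction hsb b SupY yb)
    (f : X → Y) (hf : IsTFunctor a b f)
    (fh : Hat a → Hat b) (hfh : IsHatMap a b f fh) :
    (IsLeftAdjoint a b f ↔ Cocontinuous a b f) ∧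
    (IsLeftAdjoint a b f ↔ FunEquiv b (f ∘ SupX) (SupY ∘ fh)) := by
  have h12 : IsLeftAdjoint a b f ↔ Cocontinuous a b f :=
    ⟨fun hla => leftAdjoint_cocontinuous hla,
      fun hc => cocontinuous_leftAdjoint ha hf hc⟩
  refine ⟨h12, ⟨fun hla => ?_, fun he => ?_⟩⟩
  · exact cocontinuous_funEquiv hhsa hhsb hya hyaf hyb hybf hSX hSXadj hSY hSYadj hfh
      (h12.mp hla)
  · exact funEquiv_leftAdjoint hhsa hhsb hya hyaf hyb hybf hSX hSXadj hSY hSYadj hf hfh he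

end TopTheory

end Paper
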